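/- Let I = (f₁ = x₁x₂x₃x₄x₅x₆, f₂ = x₁x₂x₃x₄x₇x₈x₉, f₃ = x₃x₄x₅x₆x₇, f₄ = x₅x₆x₇x₈) in K[x₁,…,x₉]. Then (f₁) : f₂ = (x₅x₆), (f₁, f₂) : f₃ = (x₁x₂), and (f₁, f₂, f₃) : f₄ = (x₃x₄); in particular, the successive colon ideals with respect to this order are each generated by a single monomial of degree 2. -/

import Mathlib

open MvPolynomial Finsupp

private lemma key_colon {K : Type} [Field K] (S : Set (Fin 9 →₀ ℕ)) (s t : Fin 9 →₀ ℕ)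
    (hmem : ∃ u ∈ S, u ≤ t + s)
    (hdom : ∀ m : Fin 9 →₀ ℕ, (∃ u ∈ S, u ≤ m + s) → t ≤ m) :
    (Ideal.span ((fun u => monomial u (1 : K)) '' S)).colon (Ideal.span {monomial s (1 : K)})
      = Ideal.span {monomial t (1 : K)} := by
  ext g
  rw [Ideal.mem_colon_span_singleton]
  rw [show ({monomial t (1 : K)} : Set _) = (fun u => monomial u (1 : K)) '' {t} by
    rw [Set.image_singleton]]
  constructor
  · intro h
    rw [mem_ideal_span_monomial_image]
    intro m hm
    refine ⟨t, rfl, hdom m ?_⟩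
    have hsup : m + s ∈ (g * monomial s (1 : K)).support := by
      rw [MvPolynomial.mem_support_iff, coeff_mul_monomial, mul_one]
      exact MvPolynomial.mem_support_iff.mp hm
    exact mem_ideal_span_monomial_image.mp h (m + s) hsup
  · intro h
    rw [Set.image_singleton, ← Set.image_singleton (f := fun u => monomial u (1 : K))] at h
    obtain ⟨c, rfl⟩ := Ideal.mem_span_singleton'.mp (by rwa [Set.image_singleton] at h)
    rw [mul_assoc, monomial_mul, one_mul]
    refine Ideal.mul_mem_left _ _ ?_
    rw [mem_ideal_span_monomial_image]
    intro m hm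
    have hm' : t + s = m := by simpa [support_monomial] using hm
    subst hm'
    exact hmem

private lemma colon1 {K : Type} [Field K] :
    (Ideal.span ((fun u => monomial u (1 : K)) ''
        {(single 0 1 + single 1 1 + single 2 1 + single 3 1 + single 4 1 + single 5 1 : Fin 9 →₀ ℕ)})).colon
      (Ideal.span {monomial (single 0 1 + single 1 1 + single 2 1 + single 3 1 + single 6 1 +
        single 7 1 + single 8 1 : Fin 9 →₀ ℕ) (1 : K)})
      = Ideal.span {monomial (single 4 1 + single 5 1 : Fin 9 →₀ ℕ) (1 : K)} := by
  refine key_colon _ _ _ ⟨_, rfl, ?_⟩ ?_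
  · rw [Finsupp.le_def]
    intro i
    fin_cases i <;> simp [Finsupp.single_apply]
  · rintro m ⟨u, hu, hle⟩
    rw [Set.mem_singleton_iff] at hu
    subst hu
    rw [Finsupp.le_def] at hle ⊢
    intro i
    have := hle i
    fin_cases i <;> simp_all [Finsupp.single_apply]

private lemma colon2 {K : Type} [Field K] :
    (Ideal.span ((fun u => monomial u (1 : K)) ''
        ({single 0 1 + single 1 1 + single 2 1 + single 3 1 + single 4 1 + single 5 1,
         single 0 1 + single 1 1 + single 2 1 + single 3 1 + single 6 1 + single 7 1 +
           single 8 1} : Set (Fin 9 →₀ ℕ)))).colon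
      (Ideal.span {monomial (single 2 1 + single 3 1 + single 4 1 + single 5 1 + single 6 1 : Fin 9 →₀ ℕ) (1 : K)})
      = Ideal.span {monomial (single 0 1 + single 1 1 : Fin 9 →₀ ℕ) (1 : K)} := by
  refine key_colon _ _ _ ⟨_, Or.inl rfl, ?_⟩ ?_
  · rw [Finsupp.le_def]
    intro i
    fin_cases i <;> simp [Finsupp.single_apply]
  · rintro m ⟨u, hu, hle⟩
    rw [Set.mem_insert_iff, Set.mem_singleton_iff] at hu
    rcases hu with rfl | rfl <;>
    · rw [Finsupp.le_def] at hle ⊢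
      intro i
      have := hle i
      fin_cases i <;> simp_all [Finsupp.single_apply]

private lemma colon3 {K : Type} [Field K] :
    (Ideal.span ((fun u => monomial u (1 : K)) ''
        ({single 0 1 + single 1 1 + single 2 1 + single 3 1 + single 4 1 + single 5 1,
         single 0 1 + single 1 1 + single 2 1 + single 3 1 + single 6 1 + single 7 1 + single 8 1,
         single 2 1 + single 3 1 + single 4 1 + single 5 1 + single 6 1} : Set (Fin 9 →₀ ℕ)))).colon
      (Ideal.span {monomial (single 4 1 + single 5 1 + single 6 1 + single 7 1 : Fin 9 →₀ ℕ) (1 : K)})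
      = Ideal.span {monomial (single 2 1 + single 3 1 : Fin 9 →₀ ℕ) (1 : K)} := by
  refine key_colon _ _ _ ⟨_, Or.inr (Or.inr rfl), ?_⟩ ?_
  · rw [Finsupp.le_def]
    intro i
    fin_cases i <;> simp [Finsupp.single_apply]
  · rintro m ⟨u, hu, hle⟩
    rw [Set.mem_insert_iff, Set.mem_insert_iff, Set.mem_singleton_iff] at hu
    rcases hu with rfl | rfl | rfl <;>
    · rw [Finsupp.le_def] at hle ⊢
      intro i
      have := hle i
      fin_cases i <;> simp_all [Finsupp.single_apply]

/-- For `f₁ = x₁x₂x₃x₄x₅x₆`, `f₂ = x₁x₂x₃x₄x₇x₈x₉`, `f₃ = x₃x₄x₅x₆x₇`,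
`f₄ = x₅x₆x₇x₈` in `K[x₁,…,x₉]`, the successive colon ideals are
`(f₁) : f₂ = (x₅x₆)`, `(f₁,f₂) : f₃ = (x₁x₂)`, `(f₁,f₂,f₃) : f₄ = (x₃x₄)`;
each is generated by a single monomial of degree 2. -/
theorem stmt_12 {K : Type} [Field K] :
    let x : Fin 9 → MvPolynomial (Fin 9) K := fun i => X i
    let f₁ := x 0 * x 1 * x 2 * x 3 * x 4 * x 5
    let f₂ := x 0 * x 1 * x 2 * x 3 * x 6 * x 7 * x 8
    let f₃ := x 2 * x 3 * x 4 * x 5 * x 6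
    let f₄ := x 4 * x 5 * x 6 * x 7
    (Ideal.span {f₁}).colon (Ideal.span {f₂}) = Ideal.span {x 4 * x 5} ∧
    (Ideal.span {f₁, f₂}).colon (Ideal.span {f₃}) = Ideal.span {x 0 * x 1} ∧
    (Ideal.span {f₁, f₂, f₃}).colon (Ideal.span {f₄}) = Ideal.span {x 2 * x 3} ∧
    (x 4 * x 5).totalDegree = 2 ∧ (x 0 * x 1).totalDegree = 2 ∧
    (x 2 * x 3).totalDegree = 2 := by
  intro x f₁ f₂ f₃ f₄
  have hf₁ : f₁ = monomial
      (single 0 1 + single 1 1 + single 2 1 + single 3 1 + single 4 1 + single 5 1) (1 : K) := by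
    simp [f₁, x, X, monomial_mul]
  have hf₂ : f₂ = monomial
      (single 0 1 + single 1 1 + single 2 1 + single 3 1 + single 6 1 + single 7 1 + single 8 1)
      (1 : K) := by
    simp [f₂, x, X, monomial_mul]
  have hf₃ : f₃ = monomial
      (single 2 1 + single 3 1 + single 4 1 + single 5 1 + single 6 1) (1 : K) := by
    simp [f₃, x, X, monomial_mul]
  have hf₄ : f₄ = monomial
      (single 4 1 + single 5 1 + single 6 1 + single 7 1) (1 : K) := by
    simp [f₄, x, X, monomial_mul]
  have hx45 : x 4 * x 5 = monomial (single 4 1 + single 5 1 : Fin 9 →₀ ℕ) (1 : K) := by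
    simp [x, X, monomial_mul]
  have hx01 : x 0 * x 1 = monomial (single 0 1 + single 1 1 : Fin 9 →₀ ℕ) (1 : K) := by
    simp [x, X, monomial_mul]
  have hx23 : x 2 * x 3 = monomial (single 2 1 + single 3 1 : Fin 9 →₀ ℕ) (1 : K) := by
    simp [x, X, monomial_mul]
  have deg : ∀ (i j : Fin 9), i ≠ j →
      (monomial (single i 1 + single j 1) (1 : K)).totalDegree = 2 := by
    intro i j hij
    rw [totalDegree_monomial _ one_ne_zero,
      Finsupp.sum_add_index (by simp) (by simp)]
    simp [Finsupp.sum_single_index]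
  refine ⟨?_, ?_, ?_, ?_, ?_, ?_⟩
  · rw [hf₂, hx45, show ({f₁} : Set (MvPolynomial (Fin 9) K)) = (fun u => monomial u (1 : K)) ''
      {(single 0 1 + single 1 1 + single 2 1 + single 3 1 + single 4 1 + single 5 1 : Fin 9 →₀ ℕ)} by
        rw [Set.image_singleton, hf₁]]
    exact colon1
  · rw [hf₃, hx01, show ({f₁, f₂} : Set (MvPolynomial (Fin 9) K)) =
      (fun u => monomial u (1 : K)) ''
      ({single 0 1 + single 1 1 + single 2 1 + single 3 1 + single 4 1 + single 5 1,
       single 0 1 + single 1 1 + single 2 1 + single 3 1 + single 6 1 + single 7 1 + single 8 1} : Set (Fin 9 →₀ ℕ)) by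
        rw [Set.image_insert_eq, Set.image_singleton, hf₁, hf₂]]
    exact colon2
  · rw [hf₄, hx23, show ({f₁, f₂, f₃} : Set (MvPolynomial (Fin 9) K)) =
      (fun u => monomial u (1 : K)) ''
      ({single 0 1 + single 1 1 + single 2 1 + single 3 1 + single 4 1 + single 5 1,
       single 0 1 + single 1 1 + single 2 1 + single 3 1 + single 6 1 + single 7 1 + single 8 1,
       single 2 1 + single 3 1 + single 4 1 + single 5 1 + single 6 1} : Set (Fin 9 →₀ ℕ)) by
        rw [Set.image_insert_eq, Set.image_insert_eq, Set.image_singleton, hf₁, hf₂, hf₃]]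
    exact colon3
  · rw [hx45]; exact deg 4 5 (by decide)
  · rw [hx01]; exact deg 0 1 (by decide)
  · rw [hx23]; exact deg 2 3 (by decide)
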